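/- Let T be a pretriangulated category, X an object of T, and let α₁ : C → D₁ and α₂ : C → D₂ be morphisms in T. Let U₁ and U₂ be the additive subgroups of Hom(C, X) given by the images of the precomposition maps Hom(D₁, X) → Hom(C, X) (h ↦ α₁ ∘ h, written αᵢ ≫ h) and Hom(D₂, X) → Hom(C, X). Then: (a) U₁ + U₂ equals the image of the precomposition map Hom(D₁ ⊕ D₂, X) → Hom(C, X) induced by the morphism (α₁, α₂) : C → D₁ ⊕ D₂; (b) if C → D₁ ⊕ D₂ → E → C[1] is a distinguished triangle extending (α₁, α₂), with β : D₁ ⊕ D₂ → E, then U₁ ∩ U₂ equals the image of the precomposition map Hom(E, X) → Hom(C, X) induced by the composite C → D₁ → E (i.e., α₁ followed by the inclusion into the biproduct followed by β). -/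

import Mathlib

universe v u

open CategoryTheory CategoryTheory.Limits CategoryTheory.Pretriangulated

/-- In a pretriangulated category, for morphisms `α₁ : C ⟶ D₁`, `α₂ : C ⟶ D₂` and
an object `X`, with `U₁, U₂ ⊆ Hom(C, X)` the images of the precomposition maps:
(a) `U₁ + U₂` is the image of the precomposition map induced by `(α₁, α₂) : C ⟶ D₁ ⊞ D₂`;
(b) if `C → D₁ ⊞ D₂ →β E → C⟦1⟧` is a distinguished triangle, then `U₁ ∩ U₂` is the image of
the precomposition map induced by `α₁ ≫ inl ≫ β : C ⟶ E`. -/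
theorem statement_4 {T : Type u} [Category.{v} T] [Preadditive T] [HasZeroObject T]
    [HasShift T ℤ] [∀ n : ℤ, (shiftFunctor T n).Additive] [Pretriangulated T]
    [HasBinaryBiproducts T]
    (X C D₁ D₂ : T) (α₁ : C ⟶ D₁) (α₂ : C ⟶ D₂) :
    ((Preadditive.leftComp X α₁).range ⊔ (Preadditive.leftComp X α₂).range =
        (Preadditive.leftComp X (biprod.lift α₁ α₂)).range) ∧
      (∀ (E : T) (β : D₁ ⊞ D₂ ⟶ E) (γ : E ⟶ C⟦(1 : ℤ)⟧),
        Triangle.mk (biprod.lift α₁ α₂) β γ ∈ (distTriang T) →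
          (Preadditive.leftComp X α₁).range ⊓ (Preadditive.leftComp X α₂).range =
            (Preadditive.leftComp X (α₁ ≫ biprod.inl ≫ β)).range) := by
  constructor
  · ext g
    simp only [AddSubgroup.mem_sup, AddMonoidHom.mem_range, Preadditive.leftComp, AddMonoidHom.mk'_apply]
    constructor
    · rintro ⟨_, ⟨h₁, rfl⟩, _, ⟨h₂, rfl⟩, rfl⟩
      exact ⟨biprod.desc h₁ h₂, by simp⟩
    · rintro ⟨h, rfl⟩
      refine ⟨α₁ ≫ (biprod.inl ≫ h), ⟨_, rfl⟩, α₂ ≫ (biprod.inr ≫ h), ⟨_, rfl⟩, ?_⟩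
      rw [← Category.assoc, ← Category.assoc, ← Preadditive.add_comp]
      congr 1
      ext <;> simp
  · intro E β γ hT
    ext g
    simp only [AddSubgroup.mem_inf, AddMonoidHom.mem_range, Preadditive.leftComp, AddMonoidHom.mk'_apply]
    constructor
    · rintro ⟨⟨h₁, rfl⟩, h₂, hh₂⟩
      have hz : (Triangle.mk (biprod.lift α₁ α₂) β γ).mor₁ ≫ biprod.desc h₁ (-h₂) = 0 := by
        show biprod.lift α₁ α₂ ≫ biprod.desc h₁ (-h₂) = 0
        rw [biprod.lift_desc, Preadditive.comp_neg, hh₂, add_neg_cancel]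
      obtain ⟨e, he⟩ := Triangle.yoneda_exact₂ _ hT (biprod.desc h₁ (-h₂)) hz
      refine ⟨e, ?_⟩
      have h1 : α₁ ≫ h₁ = α₁ ≫ biprod.inl ≫ biprod.desc h₁ (-h₂) := by simp
      rw [h1, he]
      simp only [Triangle.mk_mor₂]
      exact (Category.assoc (W := C) (X := D₁) (Y := E) (Z := X) α₁ (biprod.inl ≫ β) e).trans
        (congrArg (α₁ ≫ ·) (Category.assoc (W := D₁) (X := D₁ ⊞ D₂) (Y := E) (Z := X) biprod.inl β e))
    · rintro ⟨e, rfl⟩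
      have hz := comp_distTriang_mor_zero₁₂ _ hT
      change biprod.lift α₁ α₂ ≫ β = 0 at hz
      have hlift : biprod.lift α₁ α₂ ≫ β =
          α₁ ≫ biprod.inl ≫ β + α₂ ≫ biprod.inr ≫ β := by
        rw [biprod.lift_eq]
        simp
      rw [hlift] at hz
      constructor
      · exact ⟨biprod.inl ≫ β ≫ e, by simp⟩
      · refine ⟨-(biprod.inr ≫ β ≫ e), ?_⟩
        have h2 : α₂ ≫ biprod.inr ≫ β = -(α₁ ≫ biprod.inl ≫ β) := by
          rw [← add_eq_zero_iff_eq_neg, add_comm]; exact hz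
        simp only [Preadditive.comp_neg, ← Category.assoc]
        rw [Category.assoc α₂, h2]
        simp
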